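/- In the Type I-B graph G(p,s), every vertex has degree exactly q = p^s; moreover G(p,s) has exactly q² + 1 variable nodes and exactly q² + 1 constraint nodes. -/

import Mathlib

open scoped Classical

namespace TypeIB

/-- The nonzero elements of `F`. -/
abbrev Fstar (F : Type*) [Field F] := {j : F // j ≠ 0}

/-- Variable nodes of the Type I-B graph: the root `r`, the nodes `v_y` (y ∈ F) and the
nodes `(i,j)` with `i ∈ F`, `j ∈ F \ {0}`. -/
abbrev VN (F : Type*) [Field F] := Unit ⊕ (F ⊕ (F × Fstar F))

/-- Constraint nodes of the Type I-B graph: the root `r'`, the nodes `c_i` (i ∈ F) and the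
nodes `(i,j)'` with `i ∈ F`, `j ∈ F \ {0}`. -/
abbrev CN (F : Type*) [Field F] := Unit ⊕ (F ⊕ (F × Fstar F))

/-- Adjacency of the Type I-B graph `G(p,s)`:
`r ~ c_i` for every `i`; `c_i ~ (i,j)` for every `j ≠ 0`; `r' ~ v_y` for every `y`;
`v_y ~ (y,j)'` for every `j ≠ 0`; and `(i,j) ~ (k, j + i·k)'` whenever `j + i·k ≠ 0`,
except that the edges `(0,j) ~ (0,j)'` are omitted. -/
def adj (F : Type*) [Field F] : VN F → CN F → Prop
  | Sum.inl _, Sum.inl _ => False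
  | Sum.inl _, Sum.inr (Sum.inl _) => True              -- r ~ c_i
  | Sum.inl _, Sum.inr (Sum.inr _) => False
  | Sum.inr (Sum.inl _), Sum.inl _ => True              -- v_y ~ r'
  | Sum.inr (Sum.inl _), Sum.inr (Sum.inl _) => False
  | Sum.inr (Sum.inl y), Sum.inr (Sum.inr (a, _)) => a = y   -- v_y ~ (y,b)'
  | Sum.inr (Sum.inr _), Sum.inl _ => False
  | Sum.inr (Sum.inr (i, _)), Sum.inr (Sum.inl k) => k = i   -- c_i ~ (i,j)
  | Sum.inr (Sum.inr (i, j)), Sum.inr (Sum.inr (a, b)) =>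
      (b : F) = (j : F) + i * a ∧ ¬(i = 0 ∧ a = 0)

end TypeIB


set_option linter.unusedSectionVars false

section Helpers

lemma card_sum_subtype {α β : Type*} [Finite α] [Finite β] (P : α ⊕ β → Prop) :
    Nat.card {x : α ⊕ β // P x} =
      Nat.card {a : α // P (Sum.inl a)} + Nat.card {b : β // P (Sum.inr b)} := by
  rw [Nat.card_congr (Equiv.subtypeSum (p := P)), Nat.card_sum]

variable {F : Type*} [Field F] [Fintype F]

lemma card_ne (c : F) : Nat.card {a : F // a ≠ c} = Fintype.card F - 1 := by
  rw [Nat.card_eq_fintype_card]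
  simp only [ne_eq]
  rw [Fintype.card_subtype_compl, Fintype.card_subtype_eq]

lemma card_eq' (c : F) : Nat.card {a : F // a = c} = 1 := by
  rw [Nat.card_eq_fintype_card, Fintype.card_subtype_eq]

lemma card_eq2 (c : F) : Nat.card {a : F // c = a} = 1 := by
  rw [Nat.card_eq_fintype_card, Fintype.card_subtype_eq']

lemma card_fiber (g : F → F) (Q : F → Prop) :
    Nat.card {x : F × TypeIB.Fstar F // (x.2 : F) = g x.1 ∧ Q x.1} =
      Nat.card {a : F // g a ≠ 0 ∧ Q a} := by
  apply Nat.card_congr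
  refine ⟨fun x => ⟨x.1.1, by rw [← x.2.1]; exact x.1.2.2, x.2.2⟩,
          fun a => ⟨(a.1, ⟨g a.1, a.2.1⟩), rfl, a.2.2⟩, ?_, ?_⟩
  · rintro ⟨⟨a, b⟩, h1, h2⟩
    exact Subtype.ext (Prod.ext rfl (Subtype.ext h1.symm))
  · rintro ⟨a, h1, h2⟩
    rfl

lemma card_fst (y : F) :
    Nat.card {x : F × TypeIB.Fstar F // x.1 = y} = Fintype.card F - 1 := by
  rw [← card_ne (0 : F)]
  apply Nat.card_congr
  exact ⟨fun x => x.1.2, fun b => ⟨(y, b), rfl⟩,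
    by rintro ⟨⟨a, b⟩, h⟩; exact Subtype.ext (Prod.ext h.symm rfl),
    by rintro ⟨b, hb⟩; rfl⟩

lemma card_row (i : F) (j : TypeIB.Fstar F) :
    Nat.card {a : F // (j : F) + i * a ≠ 0 ∧ ¬(i = 0 ∧ a = 0)} =
      Fintype.card F - 1 := by
  by_cases hi : i = 0
  · subst hi
    rw [Nat.card_congr (Equiv.subtypeEquivRight (q := fun a => a ≠ (0 : F)) ?_),
      card_ne]
    intro a
    simp [j.2]
  · rw [Nat.card_congr (Equiv.subtypeEquivRight (q := fun a => a ≠ -(j : F) * i⁻¹) ?_),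
      card_ne]
    intro a
    constructor
    · rintro ⟨h1, -⟩ ha
      exact h1 (by rw [ha]; field_simp; ring)
    · intro ha
      refine ⟨fun h0 => ha ?_, fun h => hi h.1⟩
      field_simp
      linear_combination h0

lemma card_col (a : F) (b : TypeIB.Fstar F) :
    Nat.card {i : F // (b : F) - i * a ≠ 0 ∧ ¬(i = 0 ∧ a = 0)} =
      Fintype.card F - 1 := by
  by_cases ha : a = 0
  · subst ha
    rw [Nat.card_congr (Equiv.subtypeEquivRight (q := fun i => i ≠ (0 : F)) ?_),
      card_ne]
    intro i
    simp [b.2]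
  · rw [Nat.card_congr (Equiv.subtypeEquivRight (q := fun i => i ≠ (b : F) * a⁻¹) ?_),
      card_ne]
    intro i
    constructor
    · rintro ⟨h1, -⟩ hi
      exact h1 (by rw [hi]; field_simp; ring)
    · intro hi
      refine ⟨fun h0 => hi ?_, fun h => ha h.2⟩
      field_simp
      linear_combination -h0

end Helpers

section Main

open TypeIB

theorem stmt_2 (p s : ℕ) (hp : p.Prime) (hs : 0 < s)
    (F : Type*) [Field F] [Fintype F] (hF : Fintype.card F = p ^ s) :
    -- every variable node has degree exactly q = p^s
    (∀ v : TypeIB.VN F, Nat.card {c : TypeIB.CN F // TypeIB.adj F v c} = p ^ s) ∧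
    -- every constraint node has degree exactly q = p^s
    (∀ c : TypeIB.CN F, Nat.card {v : TypeIB.VN F // TypeIB.adj F v c} = p ^ s) ∧
    -- exactly q² + 1 variable nodes and q² + 1 constraint nodes
    Nat.card (TypeIB.VN F) = (p ^ s) ^ 2 + 1 ∧
    Nat.card (TypeIB.CN F) = (p ^ s) ^ 2 + 1 := by
  have hq1 : 1 ≤ Fintype.card F := Fintype.card_pos
  have hcard : Nat.card (Unit ⊕ (F ⊕ (F × Fstar F))) = (p ^ s) ^ 2 + 1 := by
    obtain ⟨m, hm⟩ : ∃ m, Fintype.card F = m + 1 :=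
      ⟨_, (Nat.succ_pred_eq_of_pos hq1).symm⟩
    rw [Nat.card_sum, Nat.card_sum, Nat.card_prod, Nat.card_eq_fintype_card,
      Nat.card_eq_fintype_card, show Nat.card (Fstar F) = Fintype.card F - 1 from card_ne 0,
      ← hF, hm]
    simp only [Nat.card_unique, Nat.add_sub_cancel, Fintype.card_unit]
    ring
  refine ⟨?_, ?_, hcard, hcard⟩
  · rintro (u | (y | ⟨i, j⟩))
    · -- root r
      rw [card_sum_subtype, card_sum_subtype]
      have h1 : Nat.card {a : Unit // adj F (Sum.inl u) (Sum.inl a)} = 0 := by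
        simp [adj]
      have h2 : Nat.card {a : F // adj F (Sum.inl u) (Sum.inr (Sum.inl a))} =
          Fintype.card F := by
        simp only [adj]
        rw [Nat.card_congr (Equiv.subtypeUnivEquiv fun _ => trivial), Nat.card_eq_fintype_card]
      have h3 : Nat.card {x : F × Fstar F // adj F (Sum.inl u) (Sum.inr (Sum.inr x))} =
          0 := by simp [adj]
      rw [h1, h2, h3, hF]
      omega
    · -- node v_y
      rw [card_sum_subtype, card_sum_subtype]
      have h1 : Nat.card {a : Unit // adj F (Sum.inr (Sum.inl y)) (Sum.inl a)} = 1 := by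
        simp [adj, Nat.card_eq_fintype_card]
      have h2 : Nat.card {a : F // adj F (Sum.inr (Sum.inl y)) (Sum.inr (Sum.inl a))} =
          0 := by simp [adj]
      have h3 : Nat.card
          {x : F × Fstar F // adj F (Sum.inr (Sum.inl y)) (Sum.inr (Sum.inr x))} =
          Fintype.card F - 1 := by
        rw [Nat.card_congr (Equiv.subtypeEquivRight
          (q := fun x : F × Fstar F => x.1 = y) ?_), card_fst]
        rintro ⟨a, b⟩
        exact Iff.rfl
      rw [h1, h2, h3, hF]
      omega
    · -- node (i, j)
      rw [card_sum_subtype, card_sum_subtype]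
      have h1 : Nat.card {a : Unit // adj F (Sum.inr (Sum.inr (i, j))) (Sum.inl a)} =
          0 := by simp [adj]
      have h2 : Nat.card
          {a : F // adj F (Sum.inr (Sum.inr (i, j))) (Sum.inr (Sum.inl a))} = 1 := by
        simp only [adj]
        exact card_eq' i
      have h3 : Nat.card
          {x : F × Fstar F // adj F (Sum.inr (Sum.inr (i, j))) (Sum.inr (Sum.inr x))} =
          Fintype.card F - 1 := by
        refine (Nat.card_congr (Equiv.subtypeEquivRight ?_)).trans
          ((card_fiber (fun a => (j : F) + i * a)
            (fun a => ¬(i = 0 ∧ a = 0))).trans (card_row i j))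
        rintro ⟨a, b⟩
        exact Iff.rfl
      rw [h1, h2, h3, hF]
      omega
  · rintro (u | (k | ⟨a, b⟩))
    · -- root r'
      rw [card_sum_subtype, card_sum_subtype]
      have h1 : Nat.card {x : Unit // adj F (Sum.inl x) (Sum.inl u)} = 0 := by
        simp [adj]
      have h2 : Nat.card {y : F // adj F (Sum.inr (Sum.inl y)) (Sum.inl u)} =
          Fintype.card F := by
        simp only [adj]
        rw [Nat.card_congr (Equiv.subtypeUnivEquiv fun _ => trivial), Nat.card_eq_fintype_card]
      have h3 : Nat.card {x : F × Fstar F // adj F (Sum.inr (Sum.inr x)) (Sum.inl u)} =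
          0 := by
        rw [Nat.card_eq_zero]
        left
        constructor
        rintro ⟨⟨i, j⟩, h⟩
        exact h
      rw [h1, h2, h3, hF]
      omega
    · -- node c_k
      rw [card_sum_subtype, card_sum_subtype]
      have h1 : Nat.card {x : Unit // adj F (Sum.inl x) (Sum.inr (Sum.inl k))} = 1 := by
        simp [adj, Nat.card_eq_fintype_card]
      have h2 : Nat.card {y : F // adj F (Sum.inr (Sum.inl y)) (Sum.inr (Sum.inl k))} =
          0 := by simp [adj]
      have h3 : Nat.card
          {x : F × Fstar F // adj F (Sum.inr (Sum.inr x)) (Sum.inr (Sum.inl k))} =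
          Fintype.card F - 1 := by
        rw [Nat.card_congr (Equiv.subtypeEquivRight
          (q := fun x : F × Fstar F => x.1 = k) ?_), card_fst]
        rintro ⟨i, j⟩
        exact eq_comm
      rw [h1, h2, h3, hF]
      omega
    · -- node (a, b)'
      rw [card_sum_subtype, card_sum_subtype]
      have h1 : Nat.card {x : Unit // adj F (Sum.inl x) (Sum.inr (Sum.inr (a, b)))} =
          0 := by simp [adj]
      have h2 : Nat.card
          {y : F // adj F (Sum.inr (Sum.inl y)) (Sum.inr (Sum.inr (a, b)))} = 1 := by
        simp only [adj]
        exact card_eq2 a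
      have h3 : Nat.card
          {x : F × Fstar F // adj F (Sum.inr (Sum.inr x)) (Sum.inr (Sum.inr (a, b)))} =
          Fintype.card F - 1 := by
        refine (Nat.card_congr (Equiv.subtypeEquivRight ?_)).trans
          ((card_fiber (fun i => (b : F) - i * a)
            (fun i => ¬(i = 0 ∧ a = 0))).trans (card_col a b))
        rintro ⟨i, j⟩
        simp only [adj]
        constructor
        · rintro ⟨h, h2⟩
          exact ⟨by linear_combination -h, h2⟩
        · rintro ⟨h, h2⟩
          exact ⟨by linear_combination -h, h2⟩
      rw [h1, h2, h3, hF]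
      omega

end Main
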